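/- arXiv:1108.0456 — 5 statements merged into one kernel-verified Lean document; each statement's English description precedes it below -/
import Mathlib

section
/- Every point x of a convex set C determines a unique face F of C such that x is an algebraic interior point of F, and F is the smallest face of C containing x. -/
variable {V : Type*} [AddCommGroup V] [Module ℝ V]

/-- `F` is a face of the convex set `C`: a convex subset such that whenever a point of
`F` is a nontrivial convex combination of two points of `C`, both points lie in `F`. -/
def IsFace (C F : Set V) : Prop :=
  F ⊆ C ∧ Convex ℝ F ∧
    ∀ x ∈ C, ∀ y ∈ C, ∀ t : ℝ, 0 < t → t < 1 →
      t • x + (1 - t) • y ∈ F → x ∈ F ∧ y ∈ F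

/-- `x` is an algebraic interior point of the convex set `F`. -/
def IsAlgInterior (F : Set V) (x : V) : Prop :=
  x ∈ F ∧ ∀ y ∈ F, ∃ t : ℝ, 1 < t ∧ (1 - t) • y + t • x ∈ F

/-- Every point `x` of a convex set `C` determines a unique face `F` of `C` in which `x`
is an algebraic interior point; moreover `F` is the smallest face of `C` containing `x`. -/
theorem exists_unique_face_algInterior {C : Set V} (hC : Convex ℝ C) {x : V} (hx : x ∈ C) :
    ∃! F : Set V, IsFace C F ∧ IsAlgInterior F x ∧
      ∀ G : Set V, IsFace C G → x ∈ G → F ⊆ G := by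
  classical
  set F : Set V := {y | y ∈ C ∧ ∃ t : ℝ, 1 < t ∧ (1 - t) • y + t • x ∈ C} with hFdef
  -- key equivalence: the "extension beyond x" characterization vs "x strictly between"
  have hequiv : ∀ y : V, (∃ t : ℝ, 1 < t ∧ (1 - t) • y + t • x ∈ C) ↔
      (∃ z ∈ C, ∃ u : ℝ, 0 < u ∧ u < 1 ∧ x = u • y + (1 - u) • z) := by
    intro y
    constructor
    · rintro ⟨t, ht, hz⟩
      have ht0 : t ≠ 0 := ne_of_gt (by linarith)
      refine ⟨(1 - t) • y + t • x, hz, (t - 1) / t, div_pos (by linarith) (by linarith), ?_, ?_⟩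
      · rw [div_lt_one (by linarith)]; linarith
      · match_scalars <;> field_simp <;> ring
    · rintro ⟨z, hz, u, hu0, hu1, hxe⟩
      have hu1' : (1 : ℝ) - u ≠ 0 := ne_of_gt (by linarith)
      refine ⟨1 / (1 - u), ?_, ?_⟩
      · rw [lt_div_iff₀ (by linarith)]; linarith
      · have hzz : (1 - 1 / (1 - u)) • y + (1 / (1 - u)) • x = z := by
          rw [hxe]; match_scalars <;> field_simp <;> ring
        rw [hzz]; exact hz
  have hxF : x ∈ F := by
    refine ⟨hx, 2, one_lt_two, ?_⟩
    rw [show ((1 : ℝ) - 2) • x + (2 : ℝ) • x = x by module]; exact hx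
  have hFsub : F ⊆ C := fun y hy => hy.1
  have hconv : Convex ℝ F := by
    rintro y₁ ⟨hy₁C, t₁, ht₁, hz₁⟩ y₂ ⟨hy₂C, t₂, ht₂, hz₂⟩ a b ha hb hab
    have ht : 1 < min t₁ t₂ := lt_min ht₁ ht₂
    set t := min t₁ t₂ with htdef
    have ht₁0 : t₁ ≠ 0 := ne_of_gt (by linarith)
    have ht₂0 : t₂ ≠ 0 := ne_of_gt (by linarith)
    refine ⟨hC hy₁C hy₂C ha hb hab, t, ht, ?_⟩
    have hp₁ : (1 - t) • y₁ + t • x ∈ C := by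
      rw [show (1 - t) • y₁ + t • x
          = (1 - t / t₁) • y₁ + (t / t₁) • ((1 - t₁) • y₁ + t₁ • x) by
        match_scalars <;> field_simp <;> ring]
      exact hC hy₁C hz₁ (by rw [sub_nonneg, div_le_one (by linarith)]; exact min_le_left _ _)
        (div_nonneg (by linarith) (by linarith)) (by ring)
    have hp₂ : (1 - t) • y₂ + t • x ∈ C := by
      rw [show (1 - t) • y₂ + t • x
          = (1 - t / t₂) • y₂ + (t / t₂) • ((1 - t₂) • y₂ + t₂ • x) by
        match_scalars <;> field_simp <;> ring]
      exact hC hy₂C hz₂ (by rw [sub_nonneg, div_le_one (by linarith)]; exact min_le_right _ _)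
        (div_nonneg (by linarith) (by linarith)) (by ring)
    have hb' : b = 1 - a := by linarith
    subst hb'
    rw [show (1 - t) • (a • y₁ + (1 - a) • y₂) + t • x
        = a • ((1 - t) • y₁ + t • x) + (1 - a) • ((1 - t) • y₂ + t • x) by module]
    exact hC hp₁ hp₂ ha hb (by ring)
  -- half of the face property
  have hhalf : ∀ a ∈ C, ∀ b ∈ C, ∀ t : ℝ, 0 < t → t < 1 → t • a + (1 - t) • b ∈ F → a ∈ F := by
    rintro a ha b hb t ht0 ht1 ⟨hpC, hp⟩
    obtain ⟨z, hz, u, hu0, hu1, hxe⟩ := (hequiv _).mp hp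
    have hut1 : u * t < 1 := by nlinarith
    have hut0 : (0 : ℝ) < 1 - u * t := by linarith
    have hutne : (1 : ℝ) - u * t ≠ 0 := ne_of_gt hut0
    refine ⟨ha, (hequiv a).mpr ⟨(u * (1 - t) / (1 - u * t)) • b + ((1 - u) / (1 - u * t)) • z,
      hC hb hz (div_nonneg (by nlinarith) (by linarith)) (div_nonneg (by linarith) (by linarith))
        (by field_simp; ring), u * t, by positivity, hut1, ?_⟩⟩
    rw [hxe]; match_scalars <;> field_simp <;> ring
  have hface : ∀ a ∈ C, ∀ b ∈ C, ∀ t : ℝ, 0 < t → t < 1 →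
      t • a + (1 - t) • b ∈ F → a ∈ F ∧ b ∈ F := by
    intro a ha b hb t ht0 ht1 hmem
    refine ⟨hhalf a ha b hb t ht0 ht1 hmem, hhalf b hb a ha (1 - t) (by linarith) (by linarith) ?_⟩
    rw [show (1 - t) • b + (1 - (1 - t)) • a = t • a + (1 - t) • b by module]
    exact hmem
  have hFface : IsFace C F := ⟨hFsub, hconv, hface⟩
  have halg : IsAlgInterior F x := by
    refine ⟨hxF, ?_⟩
    rintro y ⟨hyC, t, ht, hzt⟩
    have ht0 : t ≠ 0 := ne_of_gt (by linarith)
    obtain ⟨s, hsdef⟩ : ∃ s : ℝ, s = (1 + t) / 2 := ⟨_, rfl⟩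
    have hs1 : 1 < s := by rw [hsdef, lt_div_iff₀ (by norm_num)]; linarith
    have hst : s < t := by rw [hsdef, div_lt_iff₀ (by norm_num)]; linarith
    have hs1' : s - 1 ≠ 0 := ne_of_gt (by linarith)
    refine ⟨s, hs1, ?_, s / (s - 1), ?_, ?_⟩
    · rw [show (1 - s) • y + s • x = (1 - s / t) • y + (s / t) • ((1 - t) • y + t • x) by
        match_scalars <;> field_simp <;> ring]
      exact hC hyC hzt (by rw [sub_nonneg, div_le_one (by linarith)]; linarith)
        (div_nonneg (by linarith) (by linarith)) (by ring)
    · rw [lt_div_iff₀ (by linarith)]; linarith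
    · rw [show (1 - s / (s - 1)) • ((1 - s) • y + s • x) + (s / (s - 1)) • x = y by
        match_scalars <;> field_simp <;> ring]
      exact hyC
  have hmin : ∀ G : Set V, IsFace C G → x ∈ G → F ⊆ G := by
    rintro G hG hxG y ⟨hyC, hy⟩
    obtain ⟨z, hz, u, hu0, hu1, hxe⟩ := (hequiv y).mp hy
    exact (hG.2.2 y hyC z hz u hu0 hu1 (by rw [← hxe]; exact hxG)).1
  refine ⟨F, ⟨hFface, halg, hmin⟩, ?_⟩
  rintro G ⟨hGface, hGint, hGmin⟩
  exact Set.Subset.antisymm (hGmin F hFface hxF) (hmin G hGface hGint.1)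
end

section
/- Let P be a convex cone of linear maps, let CP ⊆ P be a convex subcone (the 'completely positive' maps), and call Φ ∈ P optimal if for every φ ∈ CP and every t > 1, the map (1−t)φ + tΦ does not belong to P. Then Φ is optimal if and only if the smallest face of P containing Φ contains no nonzero element of CP. (Precisely: if Φ is an algebraic interior point of a face F of P, then Φ is optimal iff F ∩ CP ⊆ {0}.) -/
variable {V : Type*} [AddCommGroup V] [Module ℝ V]

/-- Let `P` be a convex cone and `CP ⊆ P` a convex subcone.  If `Φ` is an algebraic
interior point of a face `F` of `P`, then `Φ` is optimal (for every nonzero `φ ∈ CP`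
and `t > 1`, `(1-t) • φ + t • Φ ∉ P`) if and only if `F` contains no nonzero element
of `CP`. -/
theorem optimal_iff_face_no_CP [FiniteDimensional ℝ V]
    {P CP : Set V} (hP : Convex ℝ P)
    (hPcone : ∀ c : ℝ, 0 ≤ c → ∀ v ∈ P, c • v ∈ P)
    (hCPsub : CP ⊆ P) (hCPconv : Convex ℝ CP)
    (hCPcone : ∀ c : ℝ, 0 ≤ c → ∀ v ∈ CP, c • v ∈ CP)
    {F : Set V} (hF : IsFace P F) {Φ : V} (hΦ : IsAlgInterior F Φ) :
    (∀ φ ∈ CP, φ ≠ 0 → ∀ t : ℝ, 1 < t → (1 - t) • φ + t • Φ ∉ P) ↔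
      F ∩ CP ⊆ {0} := by
  constructor
  · intro hopt φ hφ
    obtain ⟨hφF, hφCP⟩ := hφ
    by_contra hne
    have hne' : φ ≠ 0 := hne
    obtain ⟨t, ht, htF⟩ := hΦ.2 φ hφF
    exact hopt φ hφCP hne' t ht (hF.1 htF)
  · intro hsub φ hφCP hφne t ht hmem
    have ht0 : (0:ℝ) < t := lt_trans one_pos ht
    have htne : t ≠ 0 := ne_of_gt ht0
    have key : (1/t) • ((1 - t) • φ + t • Φ) + (1 - 1/t) • φ = Φ := by
      match_scalars <;> field_simp <;> ring
    have hs1 : (1:ℝ)/t < 1 := by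
      rw [div_lt_one ht0]; exact ht
    have := (hF.2.2 _ hmem _ (hCPsub hφCP) (1/t) (by positivity) hs1
      (by rw [key]; exact hΦ.1)).2
    exact hφne (hsub ⟨this, hφCP⟩)
end

section
/- A completely copositive map φ^W (with φ^W(X) = W* Xᵗ W for an m×n matrix W) is completely positive if and only if W has rank at most one; moreover when W = x y* for column vectors x ∈ ℂᵐ, y ∈ ℂⁿ, one has φ^{x y*} = φ_{x̄ y*}, where φ_V(X) = V* X V. -/
open Matrix

lemma phiAux_vecMulVec_mulVec {m n : ℕ} (a : Fin m → ℂ) (b : Fin n → ℂ) (v : Fin n → ℂ) :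
    vecMulVec a b *ᵥ v = (b ⬝ᵥ v) • a := by
  ext i
  simp only [mulVec, dotProduct, vecMulVec_apply, Pi.smul_apply, smul_eq_mul, Finset.sum_mul,
    Finset.mul_sum]
  exact Finset.sum_congr rfl fun j _ => by ring

lemma phiAux_vecMulVec_transpose {m n : ℕ} (a : Fin m → ℂ) (b : Fin n → ℂ) :
    (vecMulVec a b)ᵀ = vecMulVec b a := by
  ext i j; simp [vecMulVec_apply, mul_comm]

lemma phiAux_conj_dot {m n : ℕ} (M : Matrix (Fin m) (Fin n) ℂ) (u : Fin n → ℂ) (w : Fin m → ℂ) :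
    star u ⬝ᵥ (Mᴴ *ᵥ w) = starRingEnd ℂ (star w ⬝ᵥ (M *ᵥ u)) := by
  simp only [dotProduct, mulVec, dotProduct, conjTranspose_apply, Pi.star_apply, map_sum,
    Finset.mul_sum, Finset.sum_mul, RCLike.star_def]
  rw [Finset.sum_comm]
  refine Finset.sum_congr rfl fun j _ => Finset.sum_congr rfl fun k _ => ?_
  simp only [map_mul (starRingEnd ℂ), starRingEnd_self_apply]
  ring

lemma phiAux_sum_mulVec {m n k : ℕ} (A : Fin k → Matrix (Fin m) (Fin n) ℂ) (v : Fin n → ℂ) :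
    (∑ i, A i) *ᵥ v = ∑ i, A i *ᵥ v := by
  ext j
  simp only [mulVec, dotProduct, Finset.sum_apply, Matrix.sum_apply, Finset.sum_mul]
  exact Finset.sum_comm

lemma phiAux_dot_sum {n k : ℕ} (v : Fin n → ℂ) (w : Fin k → Fin n → ℂ) :
    v ⬝ᵥ (∑ i, w i) = ∑ i, v ⬝ᵥ w i := by
  simp only [dotProduct, Finset.sum_apply, Finset.mul_sum]
  exact Finset.sum_comm

lemma phiAux_scalar {m n : ℕ} (W : Matrix (Fin m) (Fin n) ℂ) {k : ℕ}
    (V : Fin k → Matrix (Fin m) (Fin n) ℂ)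
    (hV : ∀ X : Matrix (Fin m) (Fin m) ℂ, Wᴴ * Xᵀ * W = ∑ i, (V i)ᴴ * X * (V i))
    (z z' : Fin m → ℂ) (u u' : Fin n → ℂ) :
    (z ⬝ᵥ (W *ᵥ u')) * starRingEnd ℂ (z' ⬝ᵥ (W *ᵥ u)) =
      ∑ i, (star z' ⬝ᵥ (V i *ᵥ u')) * starRingEnd ℂ (star z ⬝ᵥ (V i *ᵥ u)) := by
  have h := congrArg (fun M => star u ⬝ᵥ (M *ᵥ u')) (hV (vecMulVec z (star z')))
  simp only [phiAux_vecMulVec_transpose, ← mulVec_mulVec, phiAux_sum_mulVec, phiAux_dot_sum,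
    phiAux_vecMulVec_mulVec, mulVec_smul, dotProduct_smul, smul_eq_mul,
    phiAux_conj_dot, star_star] at h
  exact h

lemma phiAux_dual {m : ℕ} (g : Fin 2 → (Fin m → ℂ)) (hg : LinearIndependent ℂ g)
    (c : Fin 2 → ℂ) : ∃ z : Fin m → ℂ, ∀ i, z ⬝ᵥ g i = c i := by
  let b := Module.Basis.span hg
  obtain ⟨f, hf⟩ := LinearMap.exists_extend (b.constr ℂ c)
  refine ⟨fun i => f (fun j => if i = j then 1 else 0), fun i => ?_⟩
  have h1 : f (g i) = c i := by
    have := congrArg (fun φ => φ (b i)) hf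
    simp only [LinearMap.comp_apply, Submodule.subtype_apply, b, Module.Basis.span_apply,
      Module.Basis.constr_basis] at this
    rw [this]
    have h2 := Module.Basis.constr_basis b ℂ c i
    simp only [b, Module.Basis.span_apply] at h2
    exact h2
  rw [← h1, LinearMap.pi_apply_eq_sum_univ f (g i), dotProduct]
  simp [mul_comm]

lemma phiAux_rank_le {m n : ℕ} (W : Matrix (Fin m) (Fin n) ℂ) {k : ℕ}
    (V : Fin k → Matrix (Fin m) (Fin n) ℂ)
    (hV : ∀ X : Matrix (Fin m) (Fin m) ℂ, Wᴴ * Xᵀ * W = ∑ i, (V i)ᴴ * X * (V i)) :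
    W.rank ≤ 1 := by
  have scalar_id := phiAux_scalar W V hV
  by_contra hr
  push_neg at hr
  have h2 : 2 ≤ Module.finrank ℂ (LinearMap.range W.mulVecLin) := hr
  obtain ⟨f, hf⟩ := exists_linearIndependent_of_le_finrank h2
  have hg : LinearIndependent ℂ (((LinearMap.range W.mulVecLin).subtype) ∘ f) :=
    hf.map' _ (Submodule.ker_subtype _)
  obtain ⟨u1, hu1⟩ := (f 0).2
  obtain ⟨u2, hu2⟩ := (f 1).2
  obtain ⟨z1, hz1⟩ := phiAux_dual _ hg ![0, 1]
  obtain ⟨z2, hz2⟩ := phiAux_dual _ hg ![1, 0]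
  have e0 : ∀ l : Fin 2, ((LinearMap.range W.mulVecLin).subtype ∘ f) l =
      W *ᵥ (if l = 0 then u1 else u2) := by
    intro l
    fin_cases l <;> simp [← hu1, ← hu2, Matrix.mulVecLin_apply]
  have q11 : z1 ⬝ᵥ (W *ᵥ u1) = 0 := by have := hz1 0; rwa [e0 0] at this
  have q12 : z1 ⬝ᵥ (W *ᵥ u2) = 1 := by have := hz1 1; rw [e0 1] at this; simpa using this
  have q21 : z2 ⬝ᵥ (W *ᵥ u1) = 1 := by have := hz2 0; rw [e0 0] at this; simpa using this
  have hsum : ∑ i, (star z1 ⬝ᵥ (V i *ᵥ u1)) * starRingEnd ℂ (star z1 ⬝ᵥ (V i *ᵥ u1)) = 0 := by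
    rw [← scalar_id z1 z1 u1 u1, q11, zero_mul]
  have hp : ∀ i, starRingEnd ℂ (star z1 ⬝ᵥ (V i *ᵥ u1)) = 0 := by
    have hnorm : ∑ i, Complex.normSq (star z1 ⬝ᵥ (V i *ᵥ u1)) = 0 := by
      have : ((∑ i, Complex.normSq (star z1 ⬝ᵥ (V i *ᵥ u1)) : ℝ) : ℂ) = 0 := by
        push_cast
        rw [← hsum]
        exact Finset.sum_congr rfl fun i _ => (Complex.mul_conj _).symm
      exact_mod_cast this
    intro i
    have := (Finset.sum_eq_zero_iff_of_nonneg
      (fun i _ => Complex.normSq_nonneg _)).mp hnorm i (Finset.mem_univ i)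
    simp [Complex.normSq_eq_zero.mp this]
  have key := scalar_id z1 z2 u1 u2
  rw [q12, q21] at key
  simp only [_root_.map_one, one_mul] at key
  simp only [hp, mul_zero, Finset.sum_const_zero] at key
  exact one_ne_zero key

lemma phiAux_factor {m n : ℕ} (W : Matrix (Fin m) (Fin n) ℂ) (h : W.rank ≤ 1) :
    ∃ (x : Fin m → ℂ) (c : Fin n → ℂ), W = vecMulVec x c := by
  have h1 : Module.finrank ℂ (LinearMap.range W.mulVecLin) ≤ 1 := h
  obtain ⟨v, hv⟩ := finrank_le_one_iff.mp h1
  choose c hc using fun j : Fin n =>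
    hv ⟨W *ᵥ Pi.single j 1, LinearMap.mem_range.mpr ⟨Pi.single j 1, rfl⟩⟩
  refine ⟨(v : Fin m → ℂ), c, ?_⟩
  ext i j
  have := congrArg (fun w : LinearMap.range W.mulVecLin => (w : Fin m → ℂ) i) (hc j)
  simp only [Submodule.coe_smul, Pi.smul_apply, smul_eq_mul] at this
  rw [vecMulVec_apply, mul_comm]
  rw [this]
  show W i j = (W *ᵥ Pi.single j 1) i
  simp [Matrix.mulVec_single_one]

lemma phiAux_vmv {m n : ℕ} (x : Fin m → ℂ) (y : Fin n → ℂ) (X : Matrix (Fin m) (Fin m) ℂ) :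
    (Matrix.vecMulVec x (star y))ᴴ * Xᵀ * Matrix.vecMulVec x (star y) =
      (Matrix.vecMulVec (star x) (star y))ᴴ * X *
        Matrix.vecMulVec (star x) (star y) := by
  ext i j
  simp only [Matrix.mul_apply, Matrix.conjTranspose_apply, Matrix.vecMulVec_apply,
    Matrix.transpose_apply, Pi.star_apply, star_mul', RCLike.star_def, starRingEnd_self_apply,
    Finset.sum_mul, Finset.mul_sum]
  rw [Finset.sum_comm]
  apply Finset.sum_congr rfl; intro a _
  apply Finset.sum_congr rfl; intro b _
  ring

/-- A map `M_m(ℂ) → M_n(ℂ)` is completely positive if it is a finite sum of maps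
`φ_V : X ↦ V* X V`. -/
def IsCPFun {m n : ℕ}
    (f : Matrix (Fin m) (Fin m) ℂ → Matrix (Fin n) (Fin n) ℂ) : Prop :=
  ∃ (k : ℕ) (V : Fin k → Matrix (Fin m) (Fin n) ℂ),
    ∀ X, f X = ∑ i, (V i)ᴴ * X * (V i)

/-- The completely copositive map `φ^W : X ↦ W* Xᵗ W` is completely positive if and
only if `W` has rank at most one; moreover for `W = x y*` one has
`φ^{x y*} = φ_{x̄ y*}` where `φ_V(X) = V* X V`. -/
theorem phi_sup_is_CP_iff_rank_le_one {m n : ℕ} :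
    (∀ W : Matrix (Fin m) (Fin n) ℂ,
      (IsCPFun fun (X : Matrix (Fin m) (Fin m) ℂ) => Wᴴ * Xᵀ * W) ↔ W.rank ≤ 1) ∧
    (∀ (x : Fin m → ℂ) (y : Fin n → ℂ) (X : Matrix (Fin m) (Fin m) ℂ),
      (Matrix.vecMulVec x (star y))ᴴ * Xᵀ * Matrix.vecMulVec x (star y) =
        (Matrix.vecMulVec (star x) (star y))ᴴ * X *
          Matrix.vecMulVec (star x) (star y)) := by
  constructor
  · intro W
    constructor
    · rintro ⟨k, V, hV⟩
      exact phiAux_rank_le W V hV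
    · intro h
      obtain ⟨x, c, rfl⟩ := phiAux_factor W h
      refine ⟨1, fun _ => vecMulVec (star x) c, fun X => ?_⟩
      rw [Fin.sum_univ_one]
      have := phiAux_vmv x (star c) X
      rwa [star_star] at this
  · exact phiAux_vmv
end

section
/- If a convex cone D contains two subcones C₁ (completely positive maps) and C₂ (completely copositive maps) with D = C₁ + C₂, and some nonzero element A lies in the algebraic interior of both the subset σ(E,0) := C₁-cone generated by {φ_V : V ∈ E} and the subset σ(0,E) := C₂-cone generated by {φ^W : W ∈ E} for the same subspace E, and σ(E,0) ≠ σ(0,E), then σ(0,E) is not a face of D. -/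
open Matrix

variable {m n : ℕ}

/-- The cone `σ(E,0)` of completely positive maps generated by `{φ_V : V ∈ E}`,
where `φ_V(X) = V* X V`. -/
def sigmaCP (E : Submodule ℂ (Matrix (Fin m) (Fin n) ℂ)) :
    Set (Matrix (Fin m) (Fin m) ℂ →ₗ[ℂ] Matrix (Fin n) (Fin n) ℂ) :=
  {φ | ∃ (k : ℕ) (V : Fin k → Matrix (Fin m) (Fin n) ℂ),
    (∀ i, V i ∈ E) ∧ ∀ X, φ X = ∑ i, (V i)ᴴ * X * (V i)}

/-- The cone `σ(0,E)` of completely copositive maps generated by `{φ^W : W ∈ E}`,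
where `φ^W(X) = W* Xᵗ W`. -/
def sigmaCoCP (E : Submodule ℂ (Matrix (Fin m) (Fin n) ℂ)) :
    Set (Matrix (Fin m) (Fin m) ℂ →ₗ[ℂ] Matrix (Fin n) (Fin n) ℂ) :=
  {φ | ∃ (k : ℕ) (W : Fin k → Matrix (Fin m) (Fin n) ℂ),
    (∀ i, W i ∈ E) ∧ ∀ X, φ X = ∑ i, (W i)ᴴ * Xᵀ * (W i)}

/-- The cone `D` of decomposable maps: sums of a completely positive and a completely
copositive map. -/
def Dcone (m n : ℕ) :
    Set (Matrix (Fin m) (Fin m) ℂ →ₗ[ℂ] Matrix (Fin n) (Fin n) ℂ) :=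
  {φ | ∃ ψ₁ ∈ sigmaCP (⊤ : Submodule ℂ (Matrix (Fin m) (Fin n) ℂ)),
    ∃ ψ₂ ∈ sigmaCoCP (⊤ : Submodule ℂ (Matrix (Fin m) (Fin n) ℂ)), φ = ψ₁ + ψ₂}

/-- `F` is a face of the convex cone `D`: a subset such that whenever a sum of two
elements of `D` lies in `F`, both summands lie in `F`. -/
def IsFaceCone {α : Type*} [Add α] (D F : Set α) : Prop :=
  F ⊆ D ∧ ∀ x ∈ D, ∀ y ∈ D, x + y ∈ F → x ∈ F ∧ y ∈ F

/-- `A` is an algebraic interior point of the convex subset `S`. -/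
def IsAlgInteriorPt
    (S : Set (Matrix (Fin m) (Fin m) ℂ →ₗ[ℂ] Matrix (Fin n) (Fin n) ℂ))
    (A : Matrix (Fin m) (Fin m) ℂ →ₗ[ℂ] Matrix (Fin n) (Fin n) ℂ) : Prop :=
  A ∈ S ∧ ∀ B ∈ S, ∃ t : ℝ, 1 < t ∧ (((1 - t : ℝ) : ℂ)) • B + ((t : ℂ)) • A ∈ S

-- auxiliary lemmas

def Tmap (φ : Matrix (Fin m) (Fin m) ℂ →ₗ[ℂ] Matrix (Fin n) (Fin n) ℂ) :
    Matrix (Fin m) (Fin m) ℂ →ₗ[ℂ] Matrix (Fin n) (Fin n) ℂ where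
  toFun X := φ Xᵀ
  map_add' X Y := by simp [Matrix.transpose_add]
  map_smul' c X := by simp [Matrix.transpose_smul]

lemma Tmap_apply (φ : Matrix (Fin m) (Fin m) ℂ →ₗ[ℂ] Matrix (Fin n) (Fin n) ℂ) (X) :
    Tmap φ X = φ Xᵀ := rfl

lemma Tmap_Tmap (φ : Matrix (Fin m) (Fin m) ℂ →ₗ[ℂ] Matrix (Fin n) (Fin n) ℂ) :
    Tmap (Tmap φ) = φ := by
  ext X : 1
  simp [Tmap_apply]

lemma Tmap_add (φ ψ : Matrix (Fin m) (Fin m) ℂ →ₗ[ℂ] Matrix (Fin n) (Fin n) ℂ) :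
    Tmap (φ + ψ) = Tmap φ + Tmap ψ := by
  ext X : 1
  simp [Tmap_apply]

lemma Tmap_mem_sigmaCoCP {E : Submodule ℂ (Matrix (Fin m) (Fin n) ℂ)}
    {φ} (h : φ ∈ sigmaCP E) : Tmap φ ∈ sigmaCoCP E := by
  obtain ⟨k, V, hV, hφ⟩ := h
  exact ⟨k, V, hV, fun X => hφ Xᵀ⟩

lemma Tmap_mem_sigmaCP {E : Submodule ℂ (Matrix (Fin m) (Fin n) ℂ)}
    {φ} (h : φ ∈ sigmaCoCP E) : Tmap φ ∈ sigmaCP E := by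
  obtain ⟨k, W, hW, hφ⟩ := h
  refine ⟨k, W, hW, fun X => ?_⟩
  rw [Tmap_apply, hφ Xᵀ, Matrix.transpose_transpose]

lemma zero_mem_sigmaCP (E : Submodule ℂ (Matrix (Fin m) (Fin n) ℂ)) :
    (0 : Matrix (Fin m) (Fin m) ℂ →ₗ[ℂ] Matrix (Fin n) (Fin n) ℂ) ∈ sigmaCP E :=
  ⟨0, fun i => i.elim0, fun i => i.elim0, fun X => by simp⟩

lemma zero_mem_sigmaCoCP (E : Submodule ℂ (Matrix (Fin m) (Fin n) ℂ)) :
    (0 : Matrix (Fin m) (Fin m) ℂ →ₗ[ℂ] Matrix (Fin n) (Fin n) ℂ) ∈ sigmaCoCP E :=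
  ⟨0, fun i => i.elim0, fun i => i.elim0, fun X => by simp⟩

lemma sigmaCP_mono {E : Submodule ℂ (Matrix (Fin m) (Fin n) ℂ)} {φ}
    (h : φ ∈ sigmaCP E) : φ ∈ sigmaCP (⊤ : Submodule ℂ (Matrix (Fin m) (Fin n) ℂ)) := by
  obtain ⟨k, V, hV, hφ⟩ := h
  exact ⟨k, V, fun i => Submodule.mem_top, hφ⟩

lemma sigmaCoCP_mono {E : Submodule ℂ (Matrix (Fin m) (Fin n) ℂ)} {φ}
    (h : φ ∈ sigmaCoCP E) : φ ∈ sigmaCoCP (⊤ : Submodule ℂ (Matrix (Fin m) (Fin n) ℂ)) := by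
  obtain ⟨k, W, hW, hφ⟩ := h
  exact ⟨k, W, fun i => Submodule.mem_top, hφ⟩

lemma sigmaCP_subset_Dcone (E : Submodule ℂ (Matrix (Fin m) (Fin n) ℂ)) :
    sigmaCP E ⊆ Dcone m n := fun φ h =>
  ⟨φ, sigmaCP_mono h, 0, zero_mem_sigmaCoCP _, by simp⟩

lemma sigmaCoCP_subset_Dcone (E : Submodule ℂ (Matrix (Fin m) (Fin n) ℂ)) :
    sigmaCoCP E ⊆ Dcone m n := fun φ h =>
  ⟨0, zero_mem_sigmaCP _, φ, sigmaCoCP_mono h, by simp⟩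

lemma sigmaCP_smul {E : Submodule ℂ (Matrix (Fin m) (Fin n) ℂ)} (r : ℝ) (hr : 0 ≤ r)
    {φ} (h : φ ∈ sigmaCP E) : ((r : ℂ)) • φ ∈ sigmaCP E := by
  obtain ⟨k, V, hV, hφ⟩ := h
  refine ⟨k, fun i => ((Real.sqrt r : ℝ) : ℂ) • V i, fun i => E.smul_mem _ (hV i), fun X => ?_⟩
  have key : ∀ i, ((((Real.sqrt r : ℝ) : ℂ) • V i)ᴴ) * X * (((Real.sqrt r : ℝ) : ℂ) • V i)
      = (r : ℂ) • ((V i)ᴴ * X * V i) := by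
    intro i
    rw [Matrix.conjTranspose_smul, Matrix.smul_mul, Matrix.smul_mul, Matrix.mul_smul,
      smul_smul]
    congr 1
    rw [Complex.star_def, Complex.conj_ofReal, ← Complex.ofReal_mul,
      Real.mul_self_sqrt hr]
  simp only [key, LinearMap.smul_apply, hφ, Finset.smul_sum]

lemma sigmaCoCP_smul {E : Submodule ℂ (Matrix (Fin m) (Fin n) ℂ)} (r : ℝ) (hr : 0 ≤ r)
    {φ} (h : φ ∈ sigmaCoCP E) : ((r : ℂ)) • φ ∈ sigmaCoCP E := by
  have := Tmap_mem_sigmaCoCP (sigmaCP_smul r hr (Tmap_mem_sigmaCP h))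
  have hs : Tmap ((r : ℂ) • Tmap φ) = (r : ℂ) • φ := by
    ext X : 1
    simp [Tmap_apply]
  rwa [hs] at this

lemma Dcone_smul (r : ℝ) (hr : 0 ≤ r)
    {φ} (h : φ ∈ Dcone m n) : ((r : ℂ)) • φ ∈ Dcone m n := by
  obtain ⟨ψ₁, h₁, ψ₂, h₂, rfl⟩ := h
  exact ⟨(r : ℂ) • ψ₁, sigmaCP_smul r hr h₁, (r : ℂ) • ψ₂, sigmaCoCP_smul r hr h₂,
    by rw [smul_add]⟩

lemma sigmaCP_is_face (E : Submodule ℂ (Matrix (Fin m) (Fin n) ℂ))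
    (hF : IsFaceCone (Dcone m n) (sigmaCoCP E)) :
    IsFaceCone (Dcone m n) (sigmaCP E) := by
  constructor
  · exact sigmaCP_subset_Dcone E
  · intro x hx y hy hxy
    have hxD : Tmap x ∈ Dcone m n := by
      obtain ⟨ψ₁, h₁, ψ₂, h₂, rfl⟩ := hx
      exact ⟨Tmap ψ₂, Tmap_mem_sigmaCP h₂, Tmap ψ₁, Tmap_mem_sigmaCoCP h₁,
        by rw [Tmap_add, add_comm]⟩
    have hyD : Tmap y ∈ Dcone m n := by
      obtain ⟨ψ₁, h₁, ψ₂, h₂, rfl⟩ := hy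
      exact ⟨Tmap ψ₂, Tmap_mem_sigmaCP h₂, Tmap ψ₁, Tmap_mem_sigmaCoCP h₁,
        by rw [Tmap_add, add_comm]⟩
    have hsum : Tmap x + Tmap y ∈ sigmaCoCP E := by
      rw [← Tmap_add]
      exact Tmap_mem_sigmaCoCP hxy
    obtain ⟨hx', hy'⟩ := hF.2 _ hxD _ hyD hsum
    constructor
    · have := Tmap_mem_sigmaCP hx'
      rwa [Tmap_Tmap] at this
    · have := Tmap_mem_sigmaCP hy'
      rwa [Tmap_Tmap] at this

lemma face_absorb {D F S : Set (Matrix (Fin m) (Fin m) ℂ →ₗ[ℂ] Matrix (Fin n) (Fin n) ℂ)}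
    (hF : IsFaceCone D F)
    (hFs : ∀ (r : ℝ), 0 ≤ r → ∀ φ ∈ F, ((r : ℂ)) • φ ∈ F)
    (hDs : ∀ (r : ℝ), 0 ≤ r → ∀ φ ∈ D, ((r : ℂ)) • φ ∈ D)
    (hSD : S ⊆ D) {A} (hAF : A ∈ F) (hAint : IsAlgInteriorPt S A) : S ⊆ F := by
  intro B hB
  obtain ⟨t, ht, hC⟩ := hAint.2 B hB
  set C := (((1 - t : ℝ) : ℂ)) • B + ((t : ℂ)) • A with hCdef
  have ht0 : (0 : ℝ) < t := lt_trans one_pos ht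
  have ht1 : (0 : ℝ) < t - 1 := by linarith
  have hx : ((1/t : ℝ) : ℂ) • C ∈ D := hDs _ (by positivity) _ (hSD hC)
  have hy : (((t-1)/t : ℝ) : ℂ) • B ∈ D := hDs _ (by positivity) _ (hSD hB)
  have htC : ((t : ℝ) : ℂ) ≠ 0 := by
    exact_mod_cast ne_of_gt ht0
  have ht1C : (((t - 1 : ℝ)) : ℂ) ≠ 0 := by
    exact_mod_cast ne_of_gt ht1
  have htC' : ((t : ℂ)) - 1 ≠ 0 := by
    push_cast at ht1C
    exact ht1C
  have hsum : ((1/t : ℝ) : ℂ) • C + (((t-1)/t : ℝ) : ℂ) • B = A := by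
    rw [hCdef]
    match_scalars
    · push_cast
      field_simp
      ring
    · push_cast
      field_simp
  have hyF : (((t-1)/t : ℝ) : ℂ) • B ∈ F :=
    (hF.2 _ hx _ hy (by rw [hsum]; exact hAF)).2
  have hBF := hFs (t/(t-1)) (by positivity) _ hyF
  rw [smul_smul] at hBF
  have e3 : ((t/(t-1) : ℝ) : ℂ) * (((t-1)/t : ℝ) : ℂ) = 1 := by
    push_cast
    field_simp
  rwa [e3, one_smul] at hBF

/-- If a nonzero map `A` is a common algebraic interior point of the two distinct
subsets `σ(E,0)` and `σ(0,E)` of the decomposable cone `D`, then `σ(0,E)` is not a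
face of `D`. -/
theorem sigmaCoCP_not_face {m n : ℕ} (E : Submodule ℂ (Matrix (Fin m) (Fin n) ℂ))
    (A : Matrix (Fin m) (Fin m) ℂ →ₗ[ℂ] Matrix (Fin n) (Fin n) ℂ) (hA : A ≠ 0)
    (h1 : IsAlgInteriorPt (sigmaCP E) A) (h2 : IsAlgInteriorPt (sigmaCoCP E) A)
    (hne : sigmaCP E ≠ sigmaCoCP E) :
    ¬ IsFaceCone (Dcone m n) (sigmaCoCP E) := by
  intro hF
  have hSface := sigmaCP_is_face E hF
  have h12 : sigmaCP E ⊆ sigmaCoCP E :=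
    face_absorb hF (fun r hr φ h => sigmaCoCP_smul r hr h)
      (fun r hr φ h => Dcone_smul r hr h) (sigmaCP_subset_Dcone E) h2.1 h1
  have h21 : sigmaCoCP E ⊆ sigmaCP E :=
    face_absorb hSface (fun r hr φ h => sigmaCP_smul r hr h)
      (fun r hr φ h => Dcone_smul r hr h) (sigmaCoCP_subset_Dcone E) h1.1 h2
  exact hne (Set.Subset.antisymm h12 h21)
end

section
/- The 4-dimensional subspace E of ℂ³⊗ℂ³ spanned by the vectors |00⟩+|11⟩+|22⟩, λ|01⟩+μ|10⟩, λ|12⟩+μ|21⟩, λ|20⟩+μ|02⟩ (with λμ = 1, λ,μ > 0, λ ≠ 1) contains no nonzero product vector; that is, E is completely entangled. -/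
/-- `|00⟩ + |11⟩ + |22⟩`. -/
def w0 : Fin 3 × Fin 3 → ℂ := fun p => if p.1 = p.2 then 1 else 0

/-- `λ|01⟩ + μ|10⟩`. -/
def w1 (lam mu : ℝ) : Fin 3 × Fin 3 → ℂ :=
  fun p => if p = (0, 1) then (lam : ℂ) else if p = (1, 0) then (mu : ℂ) else 0

/-- `λ|12⟩ + μ|21⟩`. -/
def w2 (lam mu : ℝ) : Fin 3 × Fin 3 → ℂ :=
  fun p => if p = (1, 2) then (lam : ℂ) else if p = (2, 1) then (mu : ℂ) else 0

/-- `λ|20⟩ + μ|02⟩`. -/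
def w3 (lam mu : ℝ) : Fin 3 × Fin 3 → ℂ :=
  fun p => if p = (2, 0) then (lam : ℂ) else if p = (0, 2) then (mu : ℂ) else 0

/-- The 4-dimensional subspace `E` of `ℂ³ ⊗ ℂ³`. -/
noncomputable def Espan (lam mu : ℝ) : Submodule ℂ (Fin 3 × Fin 3 → ℂ) :=
  Submodule.span ℂ {w0, w1 lam mu, w2 lam mu, w3 lam mu}

/-- For `λ, μ > 0`, `λμ = 1`, `λ ≠ 1`, the subspace `E` spanned by
`|00⟩+|11⟩+|22⟩`, `λ|01⟩+μ|10⟩`, `λ|12⟩+μ|21⟩`, `λ|20⟩+μ|02⟩` is completely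
entangled: it contains no nonzero product vector `x ⊗ y`. -/
theorem Espan_completely_entangled (lam mu : ℝ) (hlam : 0 < lam) (hmu : 0 < mu)
    (hmul : lam * mu = 1) (hne : lam ≠ 1) :
    ∀ x y : Fin 3 → ℂ, (fun p : Fin 3 × Fin 3 => x p.1 * y p.2) ∈ Espan lam mu →
      x = 0 ∨ y = 0 := by
  intro x y h
  rw [Espan, Submodule.mem_span_insert] at h
  obtain ⟨a, z1, hz1, hv⟩ := h
  rw [Submodule.mem_span_insert] at hz1
  obtain ⟨b, z2, hz2, hv1⟩ := hz1
  rw [Submodule.mem_span_insert] at hz2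
  obtain ⟨c, z3, hz3, hv2⟩ := hz2
  rw [Submodule.mem_span_singleton] at hz3
  obtain ⟨d, hv3⟩ := hz3
  subst hv3 hv2 hv1
  have ev : ∀ p : Fin 3 × Fin 3, x p.1 * y p.2
      = a * w0 p + b * w1 lam mu p + c * w2 lam mu p + d * w3 lam mu p := by
    intro p
    have := congrFun hv p
    simpa [Pi.add_apply, Pi.smul_apply, smul_eq_mul, add_assoc] using this
  have e00 := ev (0,0); have e11 := ev (1,1); have e22 := ev (2,2)
  have e01 := ev (0,1); have e10 := ev (1,0)
  have e12 := ev (1,2); have e21 := ev (2,1)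
  have e20 := ev (2,0); have e02 := ev (0,2)
  simp only [w0, w1, w2, w3] at e00 e11 e22 e01 e10 e12 e21 e20 e02
  norm_num [Prod.ext_iff, Fin.ext_iff] at e00 e11 e22 e01 e10 e12 e21 e20 e02
  -- key real facts
  have hnemu : lam ≠ mu := by
    intro hem
    have : lam * lam = 1 := by rw [hem] at hmul ⊢; exact hmul
    have : lam = 1 := by nlinarith
    exact hne this
  have hL3 : (lam:ℂ)^3 - (mu:ℂ)^3 ≠ 0 := by
    have : lam^3 ≠ mu^3 := fun h3 => hnemu (by nlinarith [sq_nonneg (lam - mu), sq_nonneg (lam + mu)])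
    intro h
    apply this
    have : (lam:ℂ)^3 = (mu:ℂ)^3 := by linear_combination h
    exact_mod_cast this
  have hmulC : (lam:ℂ) * (mu:ℂ) = 1 := by exact_mod_cast hmul
  -- minors
  have m1 : a^2 = b^2 := by
    have : (x 0 * y 0) * (x 1 * y 1) = (x 0 * y 1) * (x 1 * y 0) := by ring
    rw [e00, e11, e01, e10] at this
    calc a^2 = a * a := by ring
    _ = (b * lam) * (b * mu) := this
    _ = b^2 * ((lam:ℂ)*mu) := by ring
    _ = b^2 := by rw [hmulC]; ring
  have m2 : a^2 = c^2 := by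
    have : (x 1 * y 1) * (x 2 * y 2) = (x 1 * y 2) * (x 2 * y 1) := by ring
    rw [e11, e22, e12, e21] at this
    calc a^2 = a * a := by ring
    _ = (c * lam) * (c * mu) := this
    _ = c^2 * ((lam:ℂ)*mu) := by ring
    _ = c^2 := by rw [hmulC]; ring
  have m3 : a^2 = d^2 := by
    have : (x 2 * y 2) * (x 0 * y 0) = (x 2 * y 0) * (x 0 * y 2) := by ring
    rw [e22, e00, e20, e02] at this
    calc a^2 = a * a := by ring
    _ = (d * lam) * (d * mu) := this
    _ = d^2 * ((lam:ℂ)*mu) := by ring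
    _ = d^2 := by rw [hmulC]; ring
  have m4 : (lam:ℂ)^2 * (b*c) = (mu:ℂ) * (a*d) := by
    have : (x 0 * y 1) * (x 1 * y 2) = (x 0 * y 2) * (x 1 * y 1) := by ring
    rw [e01, e12, e02, e11] at this
    linear_combination this
  have m5 : (mu:ℂ)^2 * (b*c) = (lam:ℂ) * (a*d) := by
    have : (x 1 * y 0) * (x 2 * y 1) = (x 1 * y 1) * (x 2 * y 0) := by ring
    rw [e10, e21, e11, e20] at this
    linear_combination this
  -- L^3 bc = ad, M^3 bc = ad
  have k1 : (lam:ℂ)^3 * (b*c) = a*d := by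
    have := congrArg (fun t => (lam:ℂ) * t) m4
    calc (lam:ℂ)^3 * (b*c) = (lam:ℂ) * ((lam:ℂ)^2 * (b*c)) := by ring
    _ = (lam:ℂ) * ((mu:ℂ) * (a*d)) := by rw [m4]
    _ = ((lam:ℂ)*(mu:ℂ)) * (a*d) := by ring
    _ = a*d := by rw [hmulC]; ring
  have k2 : (mu:ℂ)^3 * (b*c) = a*d := by
    calc (mu:ℂ)^3 * (b*c) = (mu:ℂ) * ((mu:ℂ)^2 * (b*c)) := by ring
    _ = (mu:ℂ) * ((lam:ℂ) * (a*d)) := by rw [m5]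
    _ = ((lam:ℂ)*(mu:ℂ)) * (a*d) := by ring
    _ = a*d := by rw [hmulC]; ring
  have hbc : b * c = 0 := by
    have : ((lam:ℂ)^3 - (mu:ℂ)^3) * (b*c) = 0 := by linear_combination k1 - k2
    rcases mul_eq_zero.mp this with h | h
    · exact absurd h hL3
    · exact h
  have ha : a = 0 := by
    rcases mul_eq_zero.mp hbc with hb | hc
    · have : a^2 = 0 := by rw [m1, hb]; ring
      exact pow_eq_zero_iff (by norm_num) |>.mp this
    · have : a^2 = 0 := by rw [m2, hc]; ring
      exact pow_eq_zero_iff (by norm_num) |>.mp this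
  have hb : b = 0 := by
    have : b^2 = 0 := by rw [← m1, ha]; ring
    exact pow_eq_zero_iff (by norm_num) |>.mp this
  have hc : c = 0 := by
    have : c^2 = 0 := by rw [← m2, ha]; ring
    exact pow_eq_zero_iff (by norm_num) |>.mp this
  have hd : d = 0 := by
    have : d^2 = 0 := by rw [← m3, ha]; ring
    exact pow_eq_zero_iff (by norm_num) |>.mp this
  subst ha hb hc hd
  simp only [zero_mul, mul_zero] at e00 e11 e22 e01 e10 e12 e21 e20 e02
  by_cases hx : x = 0
  · exact Or.inl hx
  · right
    obtain ⟨i, hi⟩ := Function.ne_iff.mp hx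
    funext j
    have key : ∀ i j : Fin 3, x i * y j = 0 := by
      intro i j
      fin_cases i <;> fin_cases j <;> assumption
    have := key i j
    simp only [Pi.zero_apply] at hi ⊢
    rcases mul_eq_zero.mp this with h | h
    · exact absurd h hi
    · exact h
end
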